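/- In the same setting, the set U_{y,d} = { x ∈ X : D_p(x,y) ≤ d } contains no half-line: for every x ∈ X and h ≠ 0 there exists t ≥ 0 with x + t·h ∉ U_{y,d}. -/

import Mathlib

/-- The sublevel set `U_{y,d}` of the divergence contains no half-line: for every
`x` and `h ≠ 0` there is `t ≥ 0` with `x + t·h ∉ U_{y,d}`. -/
theorem sublevel_no_halfline
    (X : Type*) [NormedAddCommGroup X] [NormedSpace ℝ X]
    [CompleteSpace X] [UniformConvexSpace X]
    (p q : ℝ) (hp : 1 < p) (hpq : 1 / p + 1 / q = 1)
    (hnorm : ∀ x : X, x ≠ 0 → DifferentiableAt ℝ (fun y : X => ‖y‖) x)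
    (T : X → (X →L[ℝ] ℝ)) (hT0 : T 0 = 0)
    (hTnorm : ∀ x : X, x ≠ 0 → ‖T x‖ = q * (‖x‖ / p) ^ (p - 1))
    (hTxx : ∀ x : X, T x x = p * q * (‖x‖ / p) ^ p)
    (D : X → X → ℝ)
    (hD : ∀ x y : X, D x y = q * (‖x‖ / p) ^ p + p * (‖T y‖ / q) ^ q - T y x)
    (y : X) (d : ℝ) (hd : 0 < d) :
    ∀ x h : X, h ≠ 0 → ∃ t : ℝ, 0 ≤ t ∧ x + t • h ∉ {z : X | D z y ≤ d} := by
  intro x h hh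
  have hp0 : (0:ℝ) < p := lt_trans one_pos hp
  have h1p : 0 < 1/p := by positivity
  have h1p1 : 1/p < 1 := by rw [div_lt_one hp0]; exact hp
  have hq0 : (0:ℝ) < q := by
    have : 0 < 1/q := by linarith
    exact (one_div_pos.mp this)
  have hq1 : 1 < q := by
    have h1q : 1/q < 1 := by linarith
    have := (div_lt_one hq0).mp h1q
    linarith
  set M := ‖T y‖ with hM
  have hM0 : 0 ≤ M := norm_nonneg _
  have hpp : (0:ℝ) < p ^ p := Real.rpow_pos_of_pos hp0 p
  set K := (M + d + 1) * p ^ p / q with hK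
  -- eventually r^(p-1) ≥ K
  have htend : Filter.Tendsto (fun r : ℝ => r ^ (p - 1)) Filter.atTop Filter.atTop :=
    tendsto_rpow_atTop (by linarith)
  obtain ⟨R, hR⟩ := (htend.eventually_ge_atTop K).exists_forall_of_atTop
  set R' := max R 1 with hR'
  have hh0 : 0 < ‖h‖ := norm_pos_iff.mpr hh
  set t := (R' + ‖x‖) / ‖h‖ with ht
  have hR'1 : (1:ℝ) ≤ R' := le_max_right _ _
  have ht0 : 0 ≤ t := by
    apply div_nonneg _ hh0.le
    have := norm_nonneg x
    linarith
  refine ⟨t, ht0, ?_⟩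
  simp only [Set.mem_setOf_eq, not_le]
  set r := ‖x + t • h‖ with hr
  have hrR : R' ≤ r := by
    have h1 : ‖t • h‖ ≤ ‖x + t • h‖ + ‖x‖ := by
      have he := norm_sub_le (x + t • h) x
      rwa [add_sub_cancel_left] at he
    have hth : ‖t • h‖ = t * ‖h‖ := by
      rw [norm_smul t h, Real.norm_eq_abs, abs_of_nonneg ht0]
    have htv : t * ‖h‖ = R' + ‖x‖ := by rw [ht]; field_simp
    rw [hth, htv] at h1
    linarith
  have hr1 : (1:ℝ) ≤ r := le_trans hR'1 hrR
  have hr0 : (0:ℝ) < r := lt_of_lt_of_le one_pos hr1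
  have hrK : K ≤ r ^ (p - 1) := hR r (le_trans (le_max_left _ _) hrR)
  -- D (x + t•h) y ≥ q*(r/p)^p - M*r
  have hTz : T y (x + t • h) ≤ M * r := by
    calc T y (x + t • h) ≤ |T y (x + t • h)| := le_abs_self _
      _ = ‖T y (x + t • h)‖ := (Real.norm_eq_abs _).symm
      _ ≤ M * r := (T y).le_opNorm _
  have hsecond : 0 ≤ p * (‖T y‖ / q) ^ q := by
    apply mul_nonneg hp0.le
    exact Real.rpow_nonneg (by positivity) q
  have hmain : d + M * r < q * (r / p) ^ p := by
    have hdiv : (r / p) ^ p = r ^ p / p ^ p := Real.div_rpow hr0.le hp0.le p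
    have hsplit : r ^ p = r * r ^ (p - 1) := by
      nth_rewrite 2 [← Real.rpow_one r]
      rw [← Real.rpow_add hr0]
      ring_nf
    have hrp1 : (0:ℝ) < r ^ (p - 1) := Real.rpow_pos_of_pos hr0 _
    rw [hdiv, hsplit]
    have h4 : r * (M + d + 1) ≤ q * (r * r ^ (p - 1)) / p ^ p := by
      have h2 : q * (r * K) / p ^ p = r * (M + d + 1) := by
        rw [hK]; field_simp
      have h3 : q * (r * K) / p ^ p ≤ q * (r * r ^ (p - 1)) / p ^ p := by
        gcongr
      linarith
    rw [← mul_div_assoc]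
    nlinarith [hr1, hd, hM0]
  rw [hD]
  linarith
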